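/- If the prior state γ = |ψ⟩⟨ψ| is pure and N(γ) is full rank, then the Petz recovery map N̂_γ is the erasure channel: N̂_γ(X) = Tr(X)·|ψ⟩⟨ψ| for every matrix X. -/

import Mathlib

open scoped ComplexOrder
open Matrix BigOperators

def IsCPTP {d : ℕ} (N : Matrix (Fin d) (Fin d) ℂ → Matrix (Fin d) (Fin d) ℂ) : Prop :=
  ∃ (m : ℕ) (K : Fin m → Matrix (Fin d) (Fin d) ℂ),
    (∀ X, N X = ∑ i, K i * X * (K i)ᴴ) ∧ (∑ i, (K i)ᴴ * K i = 1)

/-- If the prior `γ = |ψ⟩⟨ψ|` is pure (and `N γ` is full rank), the Petz recovery map is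
the erasure channel `X ↦ Tr(X) • |ψ⟩⟨ψ|`.  Here `s` is the positive semidefinite square root
of `γ` (which equals `γ` itself) and `r` the positive square root of `N γ`. -/
theorem petz_pure_prior_is_erasure {d : ℕ}
    (N Nadj : Matrix (Fin d) (Fin d) ℂ → Matrix (Fin d) (Fin d) ℂ)
    (hN : IsCPTP N)
    (hadj : ∀ X Y, (Xᴴ * N Y).trace = ((Nadj X)ᴴ * Y).trace)
    (ψ : Fin d → ℂ) (hψ : star ψ ⬝ᵥ ψ = 1)
    (γ : Matrix (Fin d) (Fin d) ℂ) (hγ : γ = Matrix.vecMulVec ψ (star ψ))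
    (hNγ : (N γ).PosDef)
    (s r : Matrix (Fin d) (Fin d) ℂ)
    (hs : s.PosSemidef) (hss : s * s = γ)
    (hr : r.PosDef) (hrr : r * r = N γ) :
    ∀ X : Matrix (Fin d) (Fin d) ℂ,
      s * Nadj (r⁻¹ * X * r⁻¹) * s = X.trace • γ := by
  intro X
  -- γ is positive semidefinite
  have hγsd : γ.PosSemidef := by
    have := Matrix.posSemidef_conjTranspose_mul_self s
    rwa [hs.1, hss] at this
  -- γ is idempotent
  have hγγ : γ * γ = γ := by
    rw [hγ]; ext i j
    simp only [Matrix.mul_apply, Matrix.vecMulVec_apply]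
    have h1 : ∀ k, (ψ i * star ψ k) * (ψ k * star ψ j)
        = (ψ i * star ψ j) * (star ψ k * ψ k) := by intro k; ring
    rw [Finset.sum_congr rfl fun k _ => h1 k, ← Finset.mul_sum]
    have : ∑ k, star ψ k * ψ k = 1 := hψ
    rw [this, mul_one]
  -- s = γ
  have hsγ : s = γ := by
    have h1 : s * s = γ * γ := by rw [hss, hγγ]
    open scoped MatrixOrder Matrix.Norms.L2Operator in
    exact (CFC.mul_self_eq_mul_self_iff s γ (Matrix.nonneg_iff_posSemidef.mpr hs)
      (Matrix.nonneg_iff_posSemidef.mpr hγsd)).mp h1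
  -- r is invertible, r⁻¹ is Hermitian
  have hrdet : IsUnit r.det := isUnit_iff_ne_zero.mpr hr.det_pos.ne'
  have hrinvH : (r⁻¹)ᴴ = r⁻¹ := by rw [Matrix.conjTranspose_nonsing_inv, hr.1]
  -- key trace identity
  have key : (Nadj (r⁻¹ * X * r⁻¹) * γ).trace = X.trace := by
    have hY : (r⁻¹ * X * r⁻¹)ᴴ * N γ = r⁻¹ * Xᴴ * r := by
      rw [Matrix.conjTranspose_mul, Matrix.conjTranspose_mul, hrinvH, ← hrr]
      rw [Matrix.mul_assoc, Matrix.mul_assoc, ← Matrix.mul_assoc r⁻¹ r r,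
        Matrix.nonsing_inv_mul r hrdet, Matrix.one_mul, Matrix.mul_assoc]
    have h3 := hadj (r⁻¹ * X * r⁻¹) γ
    rw [hY] at h3
    have h4 : (r⁻¹ * Xᴴ * r).trace = Xᴴ.trace := by
      rw [Matrix.trace_mul_comm, ← Matrix.mul_assoc, Matrix.mul_nonsing_inv r hrdet,
        Matrix.one_mul]
    have h5 : ((Nadj (r⁻¹ * X * r⁻¹))ᴴ * γ).trace
        = star ((Nadj (r⁻¹ * X * r⁻¹) * γ).trace) := by
      rw [← Matrix.trace_conjTranspose, Matrix.conjTranspose_mul, hγsd.1, Matrix.trace_mul_comm]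
    rw [h4, h5, Matrix.trace_conjTranspose] at h3
    exact star_injective (h3.symm)
  -- main computation: γ * M * γ = (M * γ).trace • γ
  have main : ∀ M : Matrix (Fin d) (Fin d) ℂ, γ * M * γ = (M * γ).trace • γ := by
    intro M
    rw [hγ]; ext i j
    simp only [Matrix.mul_apply, Matrix.vecMulVec_apply, Matrix.smul_apply, Matrix.trace,
      Matrix.diag_apply, smul_eq_mul]
    trans (∑ l, ∑ k, ψ i * star ψ j * (star ψ k * M k l * ψ l))
    · refine Finset.sum_congr rfl fun l _ => ?_
      rw [Finset.sum_mul]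
      exact Finset.sum_congr rfl fun k _ => by ring
    · rw [Finset.sum_comm, Finset.sum_mul]
      refine Finset.sum_congr rfl fun k _ => ?_
      rw [Finset.sum_mul]
      exact Finset.sum_congr rfl fun l _ => by ring
  rw [hsγ, main, key]
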